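/- Let n ≥ 3 be an integer and let d ≥ 3 be odd. Then there exists a real symmetric matrix M, indexed by the d-tuples over {0,…,n−1}, such that M² = M, M ≠ 0, M ≠ I, and for all distinct d-tuples u, v: M(u,v) ≠ 0 if and only if the Hamming distance between u and v is at most d − 1. Consequently, for G the complement of the distance-d Hamming graph H(d,n,d) (two distinct d-tuples adjacent iff they agree in at least one coordinate), M ∈ S(G) has exactly two distinct eigenvalues (0 and 1), so q(G) = 2. -/

import Mathlib

open Matrix

/-- `S(G)`: real symmetric matrices whose off-diagonal zero/nonzero pattern
matches the adjacency of `G`; the diagonal is unconstrained. -/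
def Sset {V : Type*} [Fintype V] [DecidableEq V] (G : SimpleGraph V) : Set (Matrix V V ℝ) :=
  {M | M.IsSymm ∧ ∀ u v : V, u ≠ v → (M u v ≠ 0 ↔ G.Adj u v)}

/-- `q(G)`: the minimum number of distinct eigenvalues over matrices in `S(G)`. -/
noncomputable def minQ {V : Type*} [Fintype V] [DecidableEq V] (G : SimpleGraph V) : ℕ :=
  sInf {k : ℕ | ∃ M ∈ Sset G, (spectrum ℝ M).ncard = k}

/-- The distance-`d` graph `H(d,n,d)` of the Hamming graph: vertices are `d`-tuples over
an `n`-set, adjacent iff they differ in all `d` coordinates. -/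
def HammingDistD (d n : ℕ) : SimpleGraph (Fin d → Fin n) where
  Adj u v := u ≠ v ∧ hammingDist u v = d
  symm := ⟨fun u v h => ⟨h.1.symm, by rw [hammingDist_comm]; exact h.2⟩⟩
  loopless := ⟨fun u h => h.1 rfl⟩

section Aux

variable {n d : ℕ}

/-- single-coordinate factor of `E_d = (I - J/n)^{⊗ d}`. -/
noncomputable def ffS18 (n : ℕ) (a b : Fin n) : ℝ := (if a = b then 1 else 0) - (n : ℝ)⁻¹

lemma ffS18_symm (a b : Fin n) : ffS18 n a b = ffS18 n b a := by
  unfold ffS18; rcases eq_or_ne a b with h | h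
  · subst h; rfl
  · rw [if_neg h, if_neg h.symm]

lemma sum_ffS18 (hn : (n : ℝ) ≠ 0) (a c : Fin n) :
    ∑ b : Fin n, ffS18 n a b * ffS18 n b c = ffS18 n a c := by
  unfold ffS18
  simp only [sub_mul, mul_sub, Finset.sum_sub_distrib, ite_mul, mul_ite, one_mul, mul_one,
    zero_mul, mul_zero, Finset.sum_ite_eq, Finset.sum_ite_eq', Finset.mem_univ, if_true,
    Finset.sum_const, Finset.card_univ, Fintype.card_fin, nsmul_eq_mul]
  rw [← mul_assoc, mul_inv_cancel₀ hn]
  ring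

lemma sum_efS18 (hn : (n : ℝ) ≠ 0) (c : Fin n) :
    ∑ b : Fin n, (n : ℝ)⁻¹ * ffS18 n b c = 0 := by
  unfold ffS18
  simp only [mul_sub, Finset.sum_sub_distrib, mul_ite, mul_one, mul_zero,
    Finset.sum_ite_eq', Finset.mem_univ, if_true, Finset.sum_const, Finset.card_univ,
    Fintype.card_fin, nsmul_eq_mul]
  rw [← mul_assoc, mul_inv_cancel₀ hn]
  ring

lemma sum_feS18 (hn : (n : ℝ) ≠ 0) (a : Fin n) :
    ∑ b : Fin n, ffS18 n a b * (n : ℝ)⁻¹ = 0 := by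
  calc ∑ b : Fin n, ffS18 n a b * (n : ℝ)⁻¹ = ∑ b : Fin n, (n : ℝ)⁻¹ * ffS18 n b a := by
        refine Finset.sum_congr rfl fun b _ => ?_
        rw [ffS18_symm, mul_comm]
    _ = 0 := sum_efS18 hn a

lemma sum_eeS18 (hn : (n : ℝ) ≠ 0) (a c : Fin n) :
    ∑ _b : Fin n, (n : ℝ)⁻¹ * (n : ℝ)⁻¹ = (n : ℝ)⁻¹ := by
  simp only [Finset.sum_const, Finset.card_univ, Fintype.card_fin, nsmul_eq_mul]
  rw [← mul_assoc, mul_inv_cancel₀ hn, one_mul]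

lemma tensor_mulS18 (g h k : Fin n → Fin n → ℝ)
    (H : ∀ a c, ∑ b : Fin n, g a b * h b c = k a c) :
    (Matrix.of fun u v : Fin d → Fin n => ∏ i, g (u i) (v i)) *
      (Matrix.of fun u v : Fin d → Fin n => ∏ i, h (u i) (v i)) =
      Matrix.of fun u v : Fin d → Fin n => ∏ i, k (u i) (v i) := by
  ext u w
  simp only [Matrix.mul_apply, Matrix.of_apply]
  calc ∑ v : Fin d → Fin n, (∏ i, g (u i) (v i)) * ∏ i, h (v i) (w i)
      = ∑ v : Fin d → Fin n, ∏ i, (g (u i) (v i) * h (v i) (w i)) := by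
        refine Finset.sum_congr rfl fun v _ => ?_
        rw [Finset.prod_mul_distrib]
    _ = ∏ i, ∑ b : Fin n, g (u i) b * h b (w i) :=
        (Fintype.prod_sum fun i b => g (u i) b * h b (w i)).symm
    _ = ∏ i, k (u i) (w i) := Finset.prod_congr rfl fun i _ => H (u i) (w i)

end Aux

/-- For `n ≥ 3` and odd `d ≥ 3`, there is a real symmetric idempotent
`M ≠ 0, I` indexed by the `d`-tuples over `{0,…,n−1}` whose off-diagonal entry `M(u,v)` is
nonzero exactly when the Hamming distance of `u` and `v` is at most `d − 1`.  Consequently,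
for `G` the complement of the distance-`d` Hamming graph `H(d,n,d)`, `M ∈ S(G)` has exactly
two distinct eigenvalues (`0` and `1`), so `q(G) = 2`. -/
theorem stmt_18 (n d : ℕ) (hn : 3 ≤ n) (hd : 3 ≤ d) (hodd : Odd d) :
    ∃ M : Matrix (Fin d → Fin n) (Fin d → Fin n) ℝ,
      M.IsSymm ∧ M * M = M ∧ M ≠ 0 ∧ M ≠ 1 ∧
      (∀ u v, u ≠ v → (M u v ≠ 0 ↔ hammingDist u v ≤ d - 1)) ∧
      M ∈ Sset ((HammingDistD d n)ᶜ) ∧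
      spectrum ℝ M = {0, 1} ∧
      minQ ((HammingDistD d n)ᶜ) = 2 := by
  have hn0 : (n : ℝ) ≠ 0 := Nat.cast_ne_zero.mpr (by omega)
  have hn3 : (3 : ℝ) ≤ (n : ℝ) := by exact_mod_cast hn
  -- the two projections and the matrix M
  set A : Matrix (Fin d → Fin n) (Fin d → Fin n) ℝ :=
    Matrix.of fun u v : Fin d → Fin n => ∏ _i : Fin d, (n : ℝ)⁻¹ with hA
  set B : Matrix (Fin d → Fin n) (Fin d → Fin n) ℝ :=
    Matrix.of fun u v : Fin d → Fin n => ∏ i, ffS18 n (u i) (v i) with hB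
  set M : Matrix (Fin d → Fin n) (Fin d → Fin n) ℝ := 1 - A - B with hM
  have hdne : d ≠ 0 := by omega
  -- product identities
  have hAA : A * A = A := tensor_mulS18 _ _ _ (sum_eeS18 hn0 (n := n))
  have hAB : A * B = 0 := by
    have := tensor_mulS18 (d := d) (fun _ _ => (n : ℝ)⁻¹) (ffS18 n) (fun _ _ => 0)
      (fun a c => sum_efS18 hn0 c)
    rw [hA, hB, this]
    ext u v
    simp [Finset.prod_const, zero_pow hdne]
  have hBA : B * A = 0 := by
    have := tensor_mulS18 (d := d) (ffS18 n) (fun _ _ => (n : ℝ)⁻¹) (fun _ _ => 0)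
      (fun a c => sum_feS18 hn0 a)
    rw [hA, hB, this]
    ext u v
    simp [Finset.prod_const, zero_pow hdne]
  have hBB : B * B = B := tensor_mulS18 _ _ _ (sum_ffS18 hn0)
  -- idempotency
  have hM2 : M * M = M := by
    rw [hM]
    simp only [sub_mul, mul_sub, one_mul, mul_one, hAA, hAB, hBA, hBB]
    abel
  -- symmetry
  have hsymm : M.IsSymm := by
    refine Matrix.IsSymm.ext fun u v => ?_
    rw [hM]
    simp only [Matrix.sub_apply, Matrix.one_apply, Matrix.of_apply, hA, hB]
    have hprod : (∏ i, ffS18 n (v i) (u i)) = ∏ i, ffS18 n (u i) (v i) :=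
      Finset.prod_congr rfl fun i _ => ffS18_symm _ _
    have hif : (if v = u then (1:ℝ) else 0) = (if u = v then 1 else 0) := by
      simp [eq_comm]
    rw [hprod, hif]
  -- entry formula
  have hentry : ∀ u v : Fin d → Fin n, u ≠ v →
      M u v = -((n : ℝ)⁻¹) ^ d *
        (1 + (-1) ^ hammingDist u v * ((n : ℝ) - 1) ^ (d - hammingDist u v)) := by
    intro u v huv
    have hk : hammingDist u v ≤ d := by
      simpa using (hammingDist_le_card_fintype (x := u) (y := v))
    have hBuv : B u v = (-(n : ℝ)⁻¹) ^ hammingDist u v *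
        (1 - (n : ℝ)⁻¹) ^ (d - hammingDist u v) := by
      rw [hB]
      show (∏ i, ffS18 n (u i) (v i)) = _
      rw [← Finset.prod_filter_mul_prod_filter_not Finset.univ (fun i => u i ≠ v i)]
      have h1 : ∀ i ∈ Finset.univ.filter (fun i => u i ≠ v i),
          ffS18 n (u i) (v i) = -(n : ℝ)⁻¹ := by
        intro i hi
        have := (Finset.mem_filter.mp hi).2
        simp [ffS18, this]
      have h2 : ∀ i ∈ Finset.univ.filter (fun i => ¬u i ≠ v i),
          ffS18 n (u i) (v i) = 1 - (n : ℝ)⁻¹ := by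
        intro i hi
        have := (Finset.mem_filter.mp hi).2
        simp only [ne_eq, not_not] at this
        simp [ffS18, this]
      have hcard : (Finset.univ.filter (fun i => u i ≠ v i)).card = hammingDist u v := rfl
      have hcardnot : (Finset.univ.filter (fun i => ¬u i ≠ v i)).card
          = d - hammingDist u v := by
        have := Finset.card_filter_add_card_filter_not
          (s := (Finset.univ : Finset (Fin d))) (p := fun i => u i ≠ v i)
        simp only [Finset.card_univ, Fintype.card_fin] at this
        omega
      rw [Finset.prod_congr rfl h1, Finset.prod_congr rfl h2,
        Finset.prod_const, Finset.prod_const, hcard, hcardnot]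
    have hAuv : A u v = ((n : ℝ)⁻¹) ^ d := by
      rw [hA]; show (∏ _i : Fin d, (n : ℝ)⁻¹) = _
      rw [Finset.prod_const]; simp
    have hone : (1 : Matrix (Fin d → Fin n) (Fin d → Fin n) ℝ) u v = 0 :=
      Matrix.one_apply_ne huv
    rw [hM]
    show (1 : Matrix (Fin d → Fin n) (Fin d → Fin n) ℝ) u v - A u v - B u v = _
    rw [hone, hAuv, hBuv, zero_sub]
    have h1t : 1 - (n : ℝ)⁻¹ = ((n : ℝ) - 1) * (n : ℝ)⁻¹ := by field_simp
    rw [h1t, neg_pow, mul_pow]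
    have hsum : ((n : ℝ)⁻¹) ^ hammingDist u v * ((n : ℝ)⁻¹) ^ (d - hammingDist u v)
        = ((n : ℝ)⁻¹) ^ d := by
      rw [← pow_add]; congr 1; omega
    linear_combination
      (-((-1:ℝ) ^ hammingDist u v * ((n:ℝ) - 1) ^ (d - hammingDist u v))) * hsum
  -- the zero/nonzero pattern
  have hpattern : ∀ u v : Fin d → Fin n, u ≠ v → (M u v ≠ 0 ↔ hammingDist u v ≤ d - 1) := by
    intro u v huv
    have hk : hammingDist u v ≤ d := by
      simpa using (hammingDist_le_card_fintype (x := u) (y := v))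
    rw [hentry u v huv]
    have htne : (-((n : ℝ)⁻¹) ^ d) ≠ 0 :=
      neg_ne_zero.mpr (pow_ne_zero _ (inv_ne_zero hn0))
    rw [mul_ne_zero_iff, and_iff_right htne]
    rcases eq_or_ne (hammingDist u v) d with he | hne
    · rw [he]
      have hzero : (1 : ℝ) + (-1) ^ d * ((n : ℝ) - 1) ^ (d - d) = 0 := by
        simp [Odd.neg_one_pow hodd]
      rw [hzero]
      simp only [ne_eq, not_true_eq_false, false_iff, not_le]
      omega
    · have hklt : hammingDist u v < d := lt_of_le_of_ne hk hne
      have h2 : (2 : ℝ) ≤ ((n : ℝ) - 1) ^ (d - hammingDist u v) := by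
        calc (2 : ℝ) ≤ (n : ℝ) - 1 := by linarith
          _ ≤ ((n : ℝ) - 1) ^ (d - hammingDist u v) :=
            le_self_pow₀ (by linarith) (by omega)
      have hne0 : (1 : ℝ) + (-1) ^ hammingDist u v
          * ((n : ℝ) - 1) ^ (d - hammingDist u v) ≠ 0 := by
        rcases Nat.even_or_odd (hammingDist u v) with hev | hod
        · rw [hev.neg_one_pow]; intro hc; linarith
        · rw [hod.neg_one_pow]; intro hc; linarith
      simp only [hne0, ne_eq, not_false_eq_true, true_iff]
      omega
  -- a reference pair at Hamming distance 1
  obtain ⟨u0, v0, hu0v0, hdist1⟩ :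
      ∃ u v : Fin d → Fin n, u ≠ v ∧ hammingDist u v = 1 := by
    refine ⟨fun _ => ⟨0, by omega⟩,
      fun i => if i = ⟨0, by omega⟩ then ⟨1, by omega⟩ else ⟨0, by omega⟩, ?_, ?_⟩
    · intro hc
      have := congrFun hc ⟨0, by omega⟩
      simp [Fin.ext_iff] at this
    · have hset : (Finset.univ.filter
          (fun i : Fin d => (fun _ => (⟨0, by omega⟩ : Fin n)) i
            ≠ (fun i => if i = ⟨0, by omega⟩ then (⟨1, by omega⟩ : Fin n)
                else ⟨0, by omega⟩) i))
          = {(⟨0, by omega⟩ : Fin d)} := by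
        ext i
        simp only [Finset.mem_filter, Finset.mem_univ, true_and, Finset.mem_singleton]
        rcases eq_or_ne i ⟨0, by omega⟩ with h | h
        · subst h; simp [Fin.ext_iff]
        · simp [h, Fin.ext_iff]
      show (Finset.univ.filter _).card = 1
      rw [hset, Finset.card_singleton]
  have hMuv : M u0 v0 ≠ 0 := (hpattern u0 v0 hu0v0).mpr (by omega)
  have hM0 : M ≠ 0 := by
    intro h
    apply hMuv
    rw [h]
    rfl
  have hM1 : M ≠ 1 := by
    intro h
    apply hMuv
    rw [h, Matrix.one_apply_ne hu0v0]
  -- adjacency in the complement graph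
  have hadj : ∀ u v : Fin d → Fin n, u ≠ v →
      (((HammingDistD d n)ᶜ).Adj u v ↔ hammingDist u v ≤ d - 1) := by
    intro u v huv
    have hk : hammingDist u v ≤ d := by
      simpa using (hammingDist_le_card_fintype (x := u) (y := v))
    rw [SimpleGraph.compl_adj]
    change (u ≠ v ∧ ¬ (u ≠ v ∧ hammingDist u v = d)) ↔ _
    simp only [ne_eq, huv, not_false_eq_true, true_and,
      not_and]
    omega
  have hSset : M ∈ Sset ((HammingDistD d n)ᶜ) :=
    ⟨hsymm, fun u v huv => (hpattern u v huv).trans (hadj u v huv).symm⟩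
  -- spectrum
  have hspec : spectrum ℝ M = {0, 1} := by
    ext μ
    simp only [Set.mem_insert_iff, Set.mem_singleton_iff]
    constructor
    · intro hμ
      by_contra hcon
      push_neg at hcon
      obtain ⟨hμ0, hμ1⟩ := hcon
      rw [spectrum.mem_iff] at hμ
      apply hμ
      rw [Algebra.algebraMap_eq_smul_one]
      set N := (μ * (μ - 1))⁻¹ • ((μ - 1) • (1 : Matrix (Fin d → Fin n) (Fin d → Fin n) ℝ) + M)
        with hN
      have hexp : (μ • (1 : Matrix (Fin d → Fin n) (Fin d → Fin n) ℝ) - M)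
          * ((μ - 1) • 1 + M) = (μ * (μ - 1)) • 1 := by
        simp only [sub_mul, mul_add, smul_mul_assoc, one_mul, mul_smul_comm, mul_one, hM2,
          smul_smul]
        module
      have hne' : μ * (μ - 1) ≠ 0 := mul_ne_zero hμ0 (sub_ne_zero.mpr hμ1)
      have hmul : (μ • (1 : Matrix (Fin d → Fin n) (Fin d → Fin n) ℝ) - M) * N = 1 := by
        rw [hN, mul_smul_comm, hexp, smul_smul, inv_mul_cancel₀ hne', one_smul]
      exact ⟨⟨_, N, hmul, mul_eq_one_comm.mp hmul⟩, rfl⟩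
    · rintro (rfl | rfl)
      · rw [spectrum.mem_iff]
        intro hu
        rw [map_zero, zero_sub] at hu
        have hu' := hu.neg
        rw [neg_neg] at hu'
        obtain ⟨N, hN⟩ := hu'.exists_left_inv
        apply hM1
        calc M = 1 * M := (one_mul M).symm
          _ = (N * M) * M := by rw [hN]
          _ = N * (M * M) := by rw [mul_assoc]
          _ = N * M := by rw [hM2]
          _ = 1 := hN
      · rw [spectrum.mem_iff]
        intro hu
        rw [show (algebraMap ℝ (Matrix (Fin d → Fin n) (Fin d → Fin n) ℝ)) 1 = 1 from map_one _] at hu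
        obtain ⟨N, hN⟩ := hu.exists_left_inv
        have hid : ((1 : Matrix (Fin d → Fin n) (Fin d → Fin n) ℝ) - M) * (1 - M) = 1 - M := by
          simp only [sub_mul, mul_sub, one_mul, mul_one, hM2]
          abel
        apply hM0
        have h1M : (1 : Matrix (Fin d → Fin n) (Fin d → Fin n) ℝ) - M = 1 := by
          calc (1 : Matrix (Fin d → Fin n) (Fin d → Fin n) ℝ) - M = 1 * (1 - M) :=
              (one_mul _).symm
            _ = (N * (1 - M)) * (1 - M) := by rw [hN]
            _ = N * ((1 - M) * (1 - M)) := by rw [mul_assoc]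
            _ = N * (1 - M) := by rw [hid]
            _ = 1 := hN
        exact sub_eq_self.mp h1M
  -- minQ
  refine ⟨M, hsymm, hM2, hM0, hM1, hpattern, hSset, hspec, ?_⟩
  have h2mem : (2 : ℕ) ∈ {k : ℕ | ∃ M ∈ Sset ((HammingDistD d n)ᶜ), (spectrum ℝ M).ncard = k} :=
    ⟨M, hSset, by rw [hspec]; exact Set.ncard_pair (by norm_num)⟩
  refine le_antisymm (Nat.sInf_le h2mem) (le_csInf ⟨2, h2mem⟩ ?_)
  rintro k ⟨N, ⟨hNsymm, hNpat⟩, hk⟩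
  have hNH : N.IsHermitian := by
    rw [Matrix.IsHermitian, Matrix.conjTranspose_eq_transpose_of_trivial]
    exact hNsymm
  have hNuv : N u0 v0 ≠ 0 := by
    rw [hNpat u0 v0 hu0v0, hadj u0 v0 hu0v0]
    omega
  by_contra hlt
  push_neg at hlt
  by_cases hconst : ∀ i j, hNH.eigenvalues i = hNH.eigenvalues j
  · -- all eigenvalues equal forces N to be scalar, contradicting the edge entry
    set c := hNH.eigenvalues u0 with hc
    have hdiag : Matrix.diagonal ((RCLike.ofReal : ℝ → ℝ) ∘ hNH.eigenvalues)
        = c • (1 : Matrix (Fin d → Fin n) (Fin d → Fin n) ℝ) := by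
      rw [Matrix.smul_one_eq_diagonal, Matrix.diagonal_eq_diagonal_iff]
      intro j
      show RCLike.ofReal (hNH.eigenvalues j) = c
      rw [hconst j u0]
      rfl
    have hNc : N = c • 1 := by
      conv_lhs => rw [hNH.spectral_theorem]
      rw [hdiag, map_smul, map_one]
    apply hNuv
    rw [hNc]
    simp [Matrix.smul_apply, Matrix.one_apply_ne hu0v0]
  · push_neg at hconst
    obtain ⟨i, j, hij⟩ := hconst
    have hfin : (spectrum ℝ N).Finite := Matrix.finite_real_spectrum (𝕜 := ℝ)
    have h1lt : 1 < (spectrum ℝ N).ncard :=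
      (Set.one_lt_ncard_iff hfin).mpr
        ⟨hNH.eigenvalues i, hNH.eigenvalues j, hNH.eigenvalues_mem_spectrum_real i,
          hNH.eigenvalues_mem_spectrum_real j, hij⟩
    omega
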